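/- Let α > 0 and let Z be a real random variable on a probability space (Ω, F, P) whose left tail is regularly varying with index −α, i.e. P(Z < −u) > 0 for every u > 0 and for every λ > 0, lim_{u→∞} P(Z < −λu)/P(Z < −u) = λ^{−α}. Let I be a nonempty index set and (A_i)_{i∈I} a family of nonnegative random variables on (Ω, F, P), each A_i independent of Z, such that for some ε > 0 and C < ∞ one has E[A_i^{α+ε}] ≤ C for all i ∈ I. Then lim_{u→∞} sup_{i∈I} |P(A_i Z < −u)/P(Z < −u) − E[A_i^{α}]| = 0; that is, for every δ > 0 there exists u₀ such that for all u ≥ u₀ and all i ∈ I, |P(A_i Z < −u)/P(Z < −u) − E[A_i^{α}]| ≤ δ. -/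

import Mathlib

open MeasureTheory ProbabilityTheory Filter Set
open scoped NNReal ENNReal


lemma breiman_chain (t : ℝ → ℝ) (u₁ B : ℝ) (hu₁ : 1 ≤ u₁) (hB : 1 ≤ B)
    (hmono : Antitone t) (ht0 : ∀ x, 0 ≤ t x)
    (hstep : ∀ u, u₁ ≤ u → t (u/2) ≤ B * t u) :
    ∀ n : ℕ, ∀ a u : ℝ, 1 ≤ a → a ≤ 2^(n+1) → u₁ ≤ u / a → t (u/a) ≤ B^(n+1) * t u := by
  intro n
  induction n with
  | zero =>
    intro a u ha ha2 hua
    have hapos : (0:ℝ) < a := lt_of_lt_of_le one_pos ha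
    have hdpos : (0:ℝ) < u / a := lt_of_lt_of_le (lt_of_lt_of_le one_pos hu₁) hua
    have hupos : (0:ℝ) < u := by
      have h := mul_pos hdpos hapos
      rwa [div_mul_cancel₀ _ hapos.ne'] at h
    have huu : u₁ ≤ u := le_trans hua (by rw [div_le_iff₀ hapos]; nlinarith)
    have h1 : u / 2 ≤ u / a := div_le_div_of_nonneg_left hupos.le hapos (by simpa using ha2)
    calc t (u/a) ≤ t (u/2) := hmono h1
      _ ≤ B * t u := hstep u huu
      _ ≤ B^(0+1) * t u := by simp
  | succ n ih =>
    intro a u ha ha2 hua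
    have hapos : (0:ℝ) < a := lt_of_lt_of_le one_pos ha
    have hdpos : (0:ℝ) < u / a := lt_of_lt_of_le (lt_of_lt_of_le one_pos hu₁) hua
    have hupos : (0:ℝ) < u := by
      have h := mul_pos hdpos hapos
      rwa [div_mul_cancel₀ _ hapos.ne'] at h
    have huu : u₁ ≤ u := le_trans hua (by rw [div_le_iff₀ hapos]; nlinarith)
    have hBn : (1:ℝ) ≤ B^(n+1) := one_le_pow₀ hB
    by_cases hle : a ≤ 2
    · have h1 : u / 2 ≤ u / a := div_le_div_of_nonneg_left hupos.le hapos hle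
      calc t (u/a) ≤ t (u/2) := hmono h1
        _ ≤ B * t u := hstep u huu
        _ ≤ B^(n+1+1) * t u := by
            apply mul_le_mul_of_nonneg_right _ (ht0 u)
            calc B = 1 * B := (one_mul B).symm
              _ ≤ B^(n+1) * B := by nlinarith
              _ = B^(n+1+1) := by ring
    · push_neg at hle
      have ha2' : a / 2 ≤ 2^(n+1) := by
        rw [div_le_iff₀ (by norm_num : (0:ℝ) < 2)]
        calc a ≤ 2^(n+1+1) := ha2
          _ = 2^(n+1) * 2 := by ring
      have heq : (u/2) / (a/2) = u / a := by
        field_simp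
      have h := ih (a/2) (u/2) (by linarith) ha2' (by rw [heq]; exact hua)
      rw [heq] at h
      calc t (u/a) ≤ B^(n+1) * t (u/2) := h
        _ ≤ B^(n+1) * (B * t u) := by
            apply mul_le_mul_of_nonneg_left (hstep u huu) (by positivity)
        _ = B^(n+1+1) * t u := by ring


lemma breiman_potter (t : ℝ → ℝ) (u₁ β : ℝ) (hu₁ : 1 ≤ u₁) (hβ : 0 < β)
    (hmono : Antitone t) (ht0 : ∀ x, 0 ≤ t x)
    (hstep : ∀ u, u₁ ≤ u → t (u/2) ≤ 2^β * t u) :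
    ∀ a u : ℝ, 1 ≤ a → u₁ ≤ u / a → t (u/a) ≤ 2^(2*β) * a^β * t u := by
  intro a u ha hua
  have hapos : (0:ℝ) < a := lt_of_lt_of_le one_pos ha
  have hB : (1:ℝ) ≤ 2^β := Real.one_le_rpow (by norm_num) hβ.le
  set n : ℕ := ⌈Real.logb 2 a⌉₊ with hn
  have hlogb : Real.logb 2 a ≤ (n:ℝ) := Nat.le_ceil _
  have ha2n : a ≤ 2^(n+1) := by
    have h1 : a = (2:ℝ) ^ (Real.logb 2 a) := (Real.rpow_logb (by norm_num) (by norm_num) hapos).symm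
    have h2 : (2:ℝ) ^ (Real.logb 2 a) ≤ (2:ℝ) ^ ((n:ℝ)+1) := by
      apply Real.rpow_le_rpow_of_exponent_le (by norm_num); linarith
    calc a ≤ (2:ℝ) ^ ((n:ℝ)+1) := h1 ▸ h2
      _ = (2:ℝ) ^ (((n+1:ℕ)):ℝ) := by push_cast; ring_nf
      _ = (2:ℝ) ^ (n+1) := Real.rpow_natCast 2 (n+1)
  have hchain := breiman_chain t u₁ (2^β) hu₁ hB hmono ht0 hstep n a u ha ha2n hua
  have hkey : ((2:ℝ)^β)^(n+1) ≤ 2^(2*β) * a^β := by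
    have e1 : ((2:ℝ)^β)^(n+1) = (2:ℝ) ^ (β * ((n:ℝ)+1)) := by
      rw [← Real.rpow_natCast ((2:ℝ)^β) (n+1), ← Real.rpow_mul (by norm_num : (0:ℝ) ≤ 2)]
      push_cast; ring_nf
    have e2 : (2:ℝ) ^ (β * ((n:ℝ)+1)) = 2^(2*β) * 2^(β * ((n:ℝ)-1)) := by
      rw [← Real.rpow_add (by norm_num : (0:ℝ) < 2)]; ring_nf
    have e3 : (2:ℝ) ^ (β * ((n:ℝ)-1)) ≤ a^β := by
      rcases Nat.eq_zero_or_pos n with h0 | hpos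
      · have : β * ((n:ℝ)-1) ≤ 0 := by rw [h0]; push_cast; nlinarith
        calc (2:ℝ) ^ (β * ((n:ℝ)-1)) ≤ 1 := Real.rpow_le_one_of_one_le_of_nonpos (by norm_num) this
          _ ≤ a^β := Real.one_le_rpow ha hβ.le
      · have hlt : ((n:ℝ) - 1) < Real.logb 2 a := by
          have := (Nat.lt_ceil (n := n - 1) (a := Real.logb 2 a)).mp (by omega)
          push_cast [Nat.cast_sub hpos] at this
          linarith
        have h4 : (2:ℝ) ^ ((n:ℝ)-1) ≤ a := by
          calc (2:ℝ) ^ ((n:ℝ)-1) ≤ (2:ℝ) ^ (Real.logb 2 a) :=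
                Real.rpow_le_rpow_of_exponent_le (by norm_num) hlt.le
            _ = a := Real.rpow_logb (by norm_num) (by norm_num) hapos
        calc (2:ℝ) ^ (β * ((n:ℝ)-1)) = ((2:ℝ) ^ ((n:ℝ)-1))^β := by
              rw [← Real.rpow_mul (by norm_num : (0:ℝ) ≤ 2)]; ring_nf
          _ ≤ a^β := Real.rpow_le_rpow (by positivity) h4 hβ.le
    calc ((2:ℝ)^β)^(n+1) = (2:ℝ) ^ (β * ((n:ℝ)+1)) := e1
      _ = 2^(2*β) * 2^(β * ((n:ℝ)-1)) := e2
      _ ≤ 2^(2*β) * a^β := by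
          apply mul_le_mul_of_nonneg_left e3 (by positivity)
  calc t (u/a) ≤ ((2:ℝ)^β)^(n+1) * t u := hchain
    _ ≤ 2^(2*β) * a^β * t u := mul_le_mul_of_nonneg_right hkey (ht0 u)


lemma breiman_unif (g : ℝ → ℝ → ℝ) (f : ℝ → ℝ) (M : ℝ) (hM : 1 ≤ M)
    (hf_cont : ContinuousOn f (Icc 0 M))
    (hgmono : ∀ᶠ u in atTop, MonotoneOn (g u) (Icc 0 M))
    (hconv : ∀ a ∈ Icc (0:ℝ) M, Tendsto (fun u => g u a) atTop (nhds (f a))) :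
    ∀ δ : ℝ, 0 < δ → ∀ᶠ u in atTop, ∀ a ∈ Icc (0:ℝ) M, |g u a - f a| ≤ δ := by
  intro δ hδ
  have hMpos : (0:ℝ) < M := lt_of_lt_of_le one_pos hM
  -- uniform continuity
  have hunif : UniformContinuousOn f (Icc 0 M) :=
    isCompact_Icc.uniformContinuousOn_of_continuous hf_cont
  rw [Metric.uniformContinuousOn_iff] at hunif
  obtain ⟨d, hd, hdf⟩ := hunif (δ/2) (by linarith)
  -- grid size
  obtain ⟨N, hN⟩ := exists_nat_gt (M / d)
  have hN1 : 1 ≤ N := by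
    by_contra h
    push_neg at h
    interval_cases N
    simp at hN
    nlinarith [div_pos hMpos hd]
  have hNpos : (0:ℝ) < N := by exact_mod_cast hN1
  have hgrid : M / N < d := by
    rw [div_lt_iff₀ hNpos]
    rw [div_lt_iff₀ hd] at hN
    linarith [mul_comm d (N:ℝ)]
  set x : ℕ → ℝ := fun k => k * M / N with hx
  have hxmem : ∀ k ≤ N, x k ∈ Icc (0:ℝ) M := by
    intro k hk
    constructor
    · positivity
    · rw [div_le_iff₀ hNpos]
      have : (k:ℝ) ≤ N := by exact_mod_cast hk
      nlinarith
  -- eventually at grid points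
  have hev : ∀ᶠ u in atTop, ∀ k ∈ Finset.range (N+1), |g u (x k) - f (x k)| ≤ δ/2 := by
    rw [Filter.eventually_all_finset]
    intro k hk
    have hkN : k ≤ N := by simpa [Nat.lt_succ_iff] using hk
    have := hconv (x k) (hxmem k hkN)
    have h2 := Metric.tendsto_nhds.mp this (δ/2) (by linarith)
    filter_upwards [h2] with u hu
    rw [Real.dist_eq] at hu
    exact hu.le
  filter_upwards [hev, hgmono] with u hu hm
  intro a ha
  -- find grid interval
  set k : ℕ := min (⌊a * N / M⌋₊) (N-1) with hk
  have hk1 : k + 1 ≤ N := by omega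
  have hxk_le : x k ≤ a := by
    have h1 : (k:ℝ) ≤ a * N / M := by
      calc (k:ℝ) ≤ (⌊a * N / M⌋₊ : ℝ) := by exact_mod_cast Nat.cast_le.mpr (min_le_left _ _)
        _ ≤ a * N / M := Nat.floor_le (div_nonneg (mul_nonneg ha.1 hNpos.le) hMpos.le)
    show (k:ℝ) * M / N ≤ a
    rw [div_le_iff₀ hNpos]
    rw [le_div_iff₀ hMpos] at h1
    nlinarith
  have hle_xk1 : a ≤ x (k+1) := by
    rcases le_or_gt (⌊a * N / M⌋₊) (N-1) with hcase | hcase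
    · have hkeq : k = ⌊a * N / M⌋₊ := by omega
      have h1 : a * N / M < (k:ℝ) + 1 := by
        have h6 : a * N / M < (⌊a * N / M⌋₊ : ℝ) + 1 := Nat.lt_floor_add_one _
        have h7 : (k:ℝ) = (⌊a * N / M⌋₊ : ℝ) := by exact_mod_cast congrArg (Nat.cast : ℕ → ℝ) hkeq
        rw [h7]; exact h6
      show a ≤ ((k:ℕ)+1 : ℕ) * M / N
      rw [le_div_iff₀ hNpos]
      rw [div_lt_iff₀ hMpos] at h1
      push_cast
      nlinarith
    · have hkeq : k = N - 1 := by omega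
      have : x (k+1) = M := by
        show ((k+1:ℕ):ℝ) * M / N = M
        have hcast : ((k+1:ℕ):ℝ) = (N:ℝ) := by
          have h5 : k + 1 = N := by omega
          exact_mod_cast congrArg (Nat.cast : ℕ → ℝ) h5
        rw [hcast]
        field_simp
      rw [this]; exact ha.2
  have hxkmem : x k ∈ Icc (0:ℝ) M := hxmem k (by omega)
  have hxk1mem : x (k+1) ∈ Icc (0:ℝ) M := hxmem (k+1) hk1
  have hgap : x (k+1) - x k = M / N := by
    show ((k+1:ℕ):ℝ) * M / N - (k:ℝ) * M / N = M / N
    push_cast; ring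
  have hdk : |f (x (k+1)) - f a| < δ/2 := by
    have := hdf (x (k+1)) hxk1mem a ha (by
      rw [Real.dist_eq]
      have : x (k+1) - a ≤ M / N := by
        have := hxk_le
        linarith [hgap]
      rw [abs_of_nonneg (by linarith [hle_xk1])]
      linarith)
    rwa [Real.dist_eq] at this
  have hdk' : |f (x k) - f a| < δ/2 := by
    have := hdf (x k) hxkmem a ha (by
      rw [Real.dist_eq]
      have h2 : a - x k ≤ M / N := by linarith [hgap, hle_xk1]
      rw [abs_of_nonpos (by linarith [hxk_le])]
      linarith)
    rwa [Real.dist_eq] at this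
  have hgk := hu k (by simp [Nat.lt_succ_iff]; omega)
  have hgk1 := hu (k+1) (by simp [Nat.lt_succ_iff]; omega)
  have hupper : g u a - f a ≤ δ := by
    have h1 : g u a ≤ g u (x (k+1)) := hm ha hxk1mem hle_xk1
    have h2 : g u (x (k+1)) - f (x (k+1)) ≤ δ/2 := (abs_le.mp hgk1).2
    have h3 : f (x (k+1)) - f a < δ/2 := (abs_lt.mp hdk).2
    linarith
  have hlower : f a - g u a ≤ δ := by
    have h1 : g u (x k) ≤ g u a := hm hxkmem ha hxk_le
    have h2 : f (x k) - g u (x k) ≤ δ/2 := by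
      have := (abs_le.mp hgk).1; linarith
    have h3 : f a - f (x k) < δ/2 := by
      have := (abs_lt.mp hdk').1; linarith
    linarith
  rw [abs_le]
  constructor <;> linarith

set_option maxHeartbeats 2000000 in
/-- Uniform version of Breiman's lemma: if the left tail of `Z` is regularly varying
with index `-α`, and `(A_i)_{i ∈ I}` is a family of nonnegative random variables, each
independent of `Z`, with `E[A_i^{α+ε}] ≤ C` uniformly, then
`P(A_i Z < -u)/P(Z < -u) → E[A_i^α]` uniformly in `i` as `u → ∞`. -/
theorem uniform_breiman
    {Ω : Type*} {m0 : MeasurableSpace Ω} {P : Measure Ω} [IsProbabilityMeasure P]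
    (α : ℝ) (hα : 0 < α)
    (Z : Ω → ℝ) (hZmeas : Measurable Z)
    (hZpos : ∀ u : ℝ, 0 < u → 0 < P {ω | Z ω < -u})
    (hZrv : ∀ lam : ℝ, 0 < lam →
      Tendsto (fun u : ℝ =>
          (P {ω | Z ω < -(lam * u)}).toReal / (P {ω | Z ω < -u}).toReal)
        atTop (nhds (lam ^ (-α))))
    {I : Type*} [Nonempty I] (A : I → Ω → ℝ)
    (hAmeas : ∀ i, Measurable (A i))
    (hAnonneg : ∀ i, ∀ ω, 0 ≤ A i ω)
    (hAindep : ∀ i, IndepFun (A i) Z P)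
    (ε C : ℝ) (hε : 0 < ε)
    (hmom : ∀ i, ∫⁻ ω, ENNReal.ofReal ((A i ω) ^ (α + ε)) ∂P ≤ ENNReal.ofReal C) :
    ∀ δ : ℝ, 0 < δ → ∃ u₀ : ℝ, ∀ u ≥ u₀, ∀ i : I,
      |(P {ω | A i ω * Z ω < -u}).toReal / (P {ω | Z ω < -u}).toReal
          - ∫ ω, (A i ω) ^ α ∂P| ≤ δ := by
  intro δ hδ
  -- upgrade the moment constant to a nonnegative one
  set C' : ℝ := max C 0 with hC'def
  have hC'0 : 0 ≤ C' := le_max_right _ _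
  have hmom' : ∀ i, ∫⁻ ω, ENNReal.ofReal ((A i ω) ^ (α + ε)) ∂P ≤ ENNReal.ofReal C' :=
    fun i => (hmom i).trans (ENNReal.ofReal_le_ofReal (le_max_left _ _))
  -- the tail function
  set t : ℝ → ℝ := fun u => (P {ω | Z ω < -u}).toReal with ht_def
  have hfin : ∀ u : ℝ, P {ω | Z ω < -u} ≠ ⊤ := fun u => measure_ne_top _ _
  have ht_mono : Antitone t := by
    intro u v huv
    refine ENNReal.toReal_mono (hfin u) (measure_mono ?_)
    intro ω (h : Z ω < -v)
    exact lt_of_lt_of_le h (by linarith)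
  have ht_nonneg : ∀ x, 0 ≤ t x := fun x => ENNReal.toReal_nonneg
  have ht_pos : ∀ u : ℝ, 0 < u → 0 < t u :=
    fun u hu => ENNReal.toReal_pos (hZpos u hu).ne' (hfin u)
  have ht_le_one : ∀ x, t x ≤ 1 := by
    intro x
    calc t x ≤ (1 : ℝ≥0∞).toReal := ENNReal.toReal_mono (by simp) prob_le_one
      _ = 1 := by simp
  set β : ℝ := α + ε/2 with hβ_def
  have hβpos : 0 < β := by positivity
  -- step bound and u₁
  have hrvhalf : Tendsto (fun u : ℝ => t ((1/2) * u) / t u) atTop (nhds (((1:ℝ)/2) ^ (-α))) :=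
    hZrv (1/2) (by norm_num)
  have hhalf_eq : ((1:ℝ)/2) ^ (-α) = 2 ^ α := by
    rw [one_div, Real.inv_rpow (by norm_num : (0:ℝ) ≤ 2), ← Real.rpow_neg (by norm_num : (0:ℝ) ≤ 2)]
    ring_nf
  have hlim_lt : ((1:ℝ)/2) ^ (-α) < 2 ^ β := by
    rw [hhalf_eq]
    exact Real.rpow_lt_rpow_of_exponent_lt (by norm_num) (by simp [hβ_def]; positivity)
  have hev1 : ∀ᶠ u : ℝ in atTop, t (u/2) ≤ 2^β * t u := by
    filter_upwards [hrvhalf.eventually_lt_const hlim_lt, eventually_ge_atTop (1:ℝ)] with u h hu1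
    have htu : 0 < t u := ht_pos u (by linarith)
    rw [div_lt_iff₀ htu] at h
    have : u / 2 = 1/2 * u := by ring
    rw [this]
    exact h.le
  obtain ⟨u₁', hu₁'⟩ := eventually_atTop.mp hev1
  set u₁ : ℝ := max u₁' 1 with hu₁def
  have hu₁1 : 1 ≤ u₁ := le_max_right _ _
  have hu₁pos : 0 < u₁ := lt_of_lt_of_le one_pos hu₁1
  have hstep : ∀ u, u₁ ≤ u → t (u/2) ≤ 2^β * t u :=
    fun u hu => hu₁' u (le_trans (le_max_left _ _) hu)
  have hpotter := breiman_potter t u₁ β hu₁1 hβpos ht_mono ht_nonneg hstep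
  have hlow : ∀ u, u₁ ≤ u → t u₁ ≤ 2^(2*β) * (u/u₁)^β * t u := by
    intro u hu
    have h1 : 1 ≤ u/u₁ := (one_le_div hu₁pos).mpr hu
    have hune : u ≠ 0 := ne_of_gt (lt_of_lt_of_le hu₁pos hu)
    have h2 : u / (u/u₁) = u₁ := by field_simp
    have := hpotter (u/u₁) u h1 (by rw [h2])
    rwa [h2] at this
  -- facts about the pushforward measures
  have hprob : ∀ i, IsProbabilityMeasure (P.map (A i)) :=
    fun i => Measure.isProbabilityMeasure_map (hAmeas i).aemeasurable
  have hmeas_pow : ∀ γ : ℝ, Measurable (fun a : ℝ => a ^ γ) := by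
    intro γ; measurability
  have hmomμ : ∀ i, ∫⁻ a, ENNReal.ofReal (a ^ (α+ε)) ∂(P.map (A i)) ≤ ENNReal.ofReal C' := by
    intro i
    rw [lintegral_map ((hmeas_pow (α+ε)).ennreal_ofReal) (hAmeas i)]
    exact hmom' i
  have hae : ∀ i, ∀ᵐ a ∂(P.map (A i)), 0 ≤ a := by
    intro i
    rw [ae_map_iff (hAmeas i).aemeasurable (measurableSet_Ici (a := (0:ℝ)))]
    exact ae_of_all _ (hAnonneg i)
  have hint_pow : ∀ i, Integrable (fun a => a ^ (α+ε)) (P.map (A i)) := by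
    intro i
    refine ⟨(hmeas_pow (α+ε)).aestronglyMeasurable, ?_⟩
    rw [hasFiniteIntegral_iff_ofReal ?_]
    · exact lt_of_le_of_lt (hmomμ i) ENNReal.ofReal_lt_top
    · filter_upwards [hae i] with a ha0
      exact Real.rpow_nonneg ha0 _
  have hint_val : ∀ i, ∫ a, a^(α+ε) ∂(P.map (A i)) ≤ C' := by
    intro i
    rw [integral_eq_lintegral_of_nonneg_ae
      (by filter_upwards [hae i] with a ha0 using Real.rpow_nonneg ha0 _)
      (hmeas_pow (α+ε)).aestronglyMeasurable]
    calc (∫⁻ a, ENNReal.ofReal (a ^ (α+ε)) ∂(P.map (A i))).toReal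
        ≤ (ENNReal.ofReal C').toReal := ENNReal.toReal_mono ENNReal.ofReal_ne_top (hmomμ i)
      _ = C' := ENNReal.toReal_ofReal hC'0
  have hint_exp : ∀ i, ∀ γ : ℝ, 0 < γ → γ ≤ α + ε → Integrable (fun a => a ^ γ) (P.map (A i)) := by
    intro i γ hγ hγ2
    haveI := hprob i
    refine Integrable.mono' ((hint_pow i).add (integrable_const 1)) (hmeas_pow γ).aestronglyMeasurable ?_
    filter_upwards [hae i] with a ha0
    rw [Real.norm_eq_abs, abs_of_nonneg (Real.rpow_nonneg ha0 _)]
    show a ^ γ ≤ a ^ (α+ε) + 1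
    rcases le_or_gt a 1 with h | h
    · have h1 : a ^ γ ≤ 1 := Real.rpow_le_one ha0 h hγ.le
      have h2 : 0 ≤ a ^ (α+ε) := Real.rpow_nonneg ha0 _
      linarith
    · have h1 : a ^ γ ≤ a ^ (α+ε) := Real.rpow_le_rpow_of_exponent_le h.le hγ2
      linarith
  have htail : ∀ i, ∀ γ : ℝ, 0 < γ → γ ≤ α + ε → ∀ M : ℝ, 1 ≤ M →
      ∫ a in Ioi M, a ^ γ ∂(P.map (A i)) ≤ C' / M ^ ((α+ε) - γ) := by
    intro i γ hγ hγ2 M hM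
    haveI := hprob i
    have hMpos : (0:ℝ) < M := lt_of_lt_of_le one_pos hM
    have hMrp : (0:ℝ) < M ^ ((α+ε)-γ) := Real.rpow_pos_of_pos hMpos _
    have key : ∀ a ∈ Ioi M, a ^ γ ≤ a ^ (α+ε) / M ^ ((α+ε)-γ) := by
      intro a (ha : M < a)
      have hapos : (0:ℝ) < a := lt_trans hMpos ha
      rw [le_div_iff₀ hMrp]
      calc a^γ * M^((α+ε)-γ) ≤ a^γ * a^((α+ε)-γ) := by
            refine mul_le_mul_of_nonneg_left
              (Real.rpow_le_rpow hMpos.le ha.le (by linarith)) (Real.rpow_nonneg hapos.le _)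
        _ = a ^ (α+ε) := by rw [← Real.rpow_add hapos]; ring_nf
    calc ∫ a in Ioi M, a ^ γ ∂(P.map (A i))
        ≤ ∫ a in Ioi M, a^(α+ε) / M^((α+ε)-γ) ∂(P.map (A i)) := by
          refine setIntegral_mono_on ((hint_exp i γ hγ hγ2).integrableOn)
            (((hint_pow i).div_const _).integrableOn) measurableSet_Ioi key
      _ = (∫ a in Ioi M, a^(α+ε) ∂(P.map (A i))) / M^((α+ε)-γ) := integral_div _ _
      _ ≤ C' / M^((α+ε)-γ) := by
          have hnum : ∫ a in Ioi M, a^(α+ε) ∂(P.map (A i)) ≤ C' :=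
            le_trans (setIntegral_le_integral (hint_pow i)
              (by filter_upwards [hae i] with a ha0 using Real.rpow_nonneg ha0 _)) (hint_val i)
          exact div_le_div_of_nonneg_right hnum hMrp.le
  -- Markov inequality for the pushforward measures
  have hmark : ∀ i, ∀ x : ℝ, 1 ≤ x → ((P.map (A i)) (Ioi x)).toReal ≤ C' / x ^ (α+ε) := by
    intro i x hx
    have hxpos : (0:ℝ) < x := lt_of_lt_of_le one_pos hx
    have hxrp : (0:ℝ) < x ^ (α+ε) := Real.rpow_pos_of_pos hxpos _
    have h1 : ENNReal.ofReal (x^(α+ε)) * (P.map (A i)) (Ioi x)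
        ≤ ∫⁻ a, ENNReal.ofReal (a^(α+ε)) ∂(P.map (A i)) := by
      have h2 := mul_meas_ge_le_lintegral₀
        (μ := P.map (A i)) ((hmeas_pow (α+ε)).ennreal_ofReal).aemeasurable
        (ENNReal.ofReal (x^(α+ε)))
      refine le_trans (mul_le_mul_right (measure_mono ?_) _) h2
      intro a (ha : x < a)
      show ENNReal.ofReal (x^(α+ε)) ≤ ENNReal.ofReal (a^(α+ε))
      exact ENNReal.ofReal_le_ofReal (Real.rpow_le_rpow hxpos.le ha.le (by positivity))
    have h3 : (P.map (A i)) (Ioi x) ≤ ENNReal.ofReal C' / ENNReal.ofReal (x^(α+ε)) := by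
      rw [ENNReal.le_div_iff_mul_le (Or.inl (by simp [hxrp])) (Or.inl ENNReal.ofReal_ne_top)]
      rw [mul_comm]
      exact le_trans h1 (hmomμ i)
    calc ((P.map (A i)) (Ioi x)).toReal
        ≤ (ENNReal.ofReal C' / ENNReal.ofReal (x^(α+ε))).toReal := by
          refine ENNReal.toReal_mono ?_ h3
          exact (ENNReal.div_lt_top ENNReal.ofReal_ne_top (by simp [hxrp])).ne
      _ = C' / x ^ (α+ε) := by
          rw [ENNReal.toReal_div, ENNReal.toReal_ofReal hC'0, ENNReal.toReal_ofReal hxrp.le]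
  -- the limiting function and the ratio functions
  set f : ℝ → ℝ := fun a => a ^ α with hf_def
  have hf_contAll : Continuous f :=
    continuous_iff_continuousAt.mpr fun a => Real.continuousAt_rpow_const a α (Or.inr hα.le)
  set g : ℝ → ℝ → ℝ := fun u a => (if 0 < a then t (u/a) else 0) / t u with hg_def
  -- choose M
  have hMex : ∃ M : ℝ, 1 ≤ M ∧ 2^(2*β) * (C' / M ^ (ε/2)) ≤ δ/4 ∧ C' / M ^ ε ≤ δ/4 := by
    have h1 : Tendsto (fun M : ℝ => 2^(2*β) * (C' / M ^ (ε/2))) atTop (nhds 0) := by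
      have h2 : Tendsto (fun M : ℝ => C' / M ^ (ε/2)) atTop (nhds 0) :=
        tendsto_const_nhds.div_atTop (tendsto_rpow_atTop (half_pos hε))
      simpa using h2.const_mul ((2:ℝ)^(2*β))
    have h3 : Tendsto (fun M : ℝ => C' / M ^ ε) atTop (nhds 0) :=
      tendsto_const_nhds.div_atTop (tendsto_rpow_atTop hε)
    have h4 := (h1.eventually_lt_const (show (0:ℝ) < δ/4 by linarith)).and
      ((h3.eventually_lt_const (show (0:ℝ) < δ/4 by linarith)).and (eventually_ge_atTop (1:ℝ)))
    obtain ⟨M, hM⟩ := h4.exists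
    exact ⟨M, hM.2.2, hM.1.le, hM.2.1.le⟩
  obtain ⟨M, hM1, hMa, hMb⟩ := hMex
  have hMpos : (0:ℝ) < M := lt_of_lt_of_le one_pos hM1
  -- uniform convergence on [0, M]
  have hgm : ∀ᶠ u : ℝ in atTop, MonotoneOn (g u) (Icc 0 M) := by
    filter_upwards [eventually_gt_atTop (0:ℝ)] with u hu
    intro x hx y hy hxy
    have htu : 0 < t u := ht_pos u hu
    have hnum : (if 0 < x then t (u/x) else 0) ≤ (if 0 < y then t (u/y) else 0) := by
      by_cases hx0 : 0 < x
      · have hy0 : 0 < y := lt_of_lt_of_le hx0 hxy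
        simp only [hx0, hy0, if_true]
        exact ht_mono (div_le_div_of_nonneg_left hu.le hx0 hxy)
      · simp only [hx0, if_false]
        split_ifs with h
        · exact ht_nonneg _
        · exact le_refl _
    exact div_le_div_of_nonneg_right hnum htu.le
  have hgc : ∀ a ∈ Icc (0:ℝ) M, Tendsto (fun u => g u a) atTop (nhds (f a)) := by
    intro a ha
    rcases eq_or_lt_of_le ha.1 with h0 | hpos
    · have hfa : f a = 0 := by rw [hf_def, ← h0]; exact Real.zero_rpow hα.ne'
      have hga : ∀ u, g u a = 0 := by
        intro u
        rw [hg_def]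
        simp [← h0]
      rw [hfa]
      simp only [funext hga]
      exact tendsto_const_nhds
    · have hrv : Tendsto (fun u : ℝ => t (a⁻¹ * u) / t u) atTop (nhds ((a⁻¹) ^ (-α))) :=
        hZrv a⁻¹ (inv_pos.mpr hpos)
      have hlim : (a⁻¹) ^ (-α) = a ^ α := by
        rw [Real.inv_rpow hpos.le, ← Real.rpow_neg hpos.le]
        ring_nf
      rw [hlim] at hrv
      refine hrv.congr (fun u => ?_)
      rw [hg_def]
      simp only [hpos, if_true]
      rw [div_eq_inv_mul u a]
  have hunif := breiman_unif g f M hM1 (hf_contAll.continuousOn) hgm hgc (δ/4) (by linarith)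
  obtain ⟨u₂, hu₂⟩ := eventually_atTop.mp hunif
  -- far tail threshold
  have hfar : ∀ᶠ u : ℝ in atTop,
      (2^(2*β) * C' / t u₁) * (u/u₁) ^ (-(ε/2)) ≤ δ/4 := by
    have h2 : Tendsto (fun u : ℝ => u/u₁) atTop atTop := tendsto_id.atTop_div_const hu₁pos
    have h1 : Tendsto (fun u : ℝ => (u/u₁) ^ (-(ε/2))) atTop (nhds 0) :=
      (tendsto_rpow_neg_atTop (half_pos hε)).comp h2
    have h3 : Tendsto (fun u : ℝ => (2^(2*β) * C' / t u₁) * (u/u₁)^(-(ε/2))) atTop (nhds 0) := by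
      simpa using h1.const_mul (2^(2*β) * C' / t u₁)
    filter_upwards [h3.eventually_lt_const (show (0:ℝ) < δ/4 by linarith)] with u h
    exact h.le
  obtain ⟨u₄, hu₄⟩ := eventually_atTop.mp hfar
  refine ⟨max (max u₁ u₂) (max u₄ 1), fun u hu i => ?_⟩
  haveI := hprob i
  haveI : IsProbabilityMeasure (P.map Z) := Measure.isProbabilityMeasure_map hZmeas.aemeasurable
  have hu₁u : u₁ ≤ u := le_trans (le_trans (le_max_left _ _) (le_max_left _ _)) hu
  have hu₂u : u₂ ≤ u := le_trans (le_trans (le_max_right _ _) (le_max_left _ _)) hu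
  have hu₄u : u₄ ≤ u := le_trans (le_trans (le_max_left _ _) (le_max_right _ _)) hu
  have hu1 : (1:ℝ) ≤ u := le_trans (le_trans (le_max_right _ _) (le_max_right _ _)) hu
  have hupos : (0:ℝ) < u := lt_of_lt_of_le one_pos hu1
  have htu : 0 < t u := ht_pos u hupos
  -- numerator identity via independence
  have hmap : P.map (fun ω => (A i ω, Z ω)) = (P.map (A i)).prod (P.map Z) :=
    ((indepFun_iff_map_prod_eq_prod_map_map (hAmeas i).aemeasurable hZmeas.aemeasurable).mp
      (hAindep i))
  have hS : MeasurableSet {p : ℝ × ℝ | p.1 * p.2 < -u} :=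
    measurableSet_lt (measurable_fst.mul measurable_snd) measurable_const
  have hNum : P {ω | A i ω * Z ω < -u} = ∫⁻ a, (P.map Z) {z | a * z < -u} ∂(P.map (A i)) := by
    have h1 : {ω | A i ω * Z ω < -u} = (fun ω => (A i ω, Z ω)) ⁻¹' {p : ℝ × ℝ | p.1 * p.2 < -u} :=
      rfl
    rw [h1, ← Measure.map_apply ((hAmeas i).prodMk hZmeas) hS, hmap, Measure.prod_apply hS]
    rfl
  have hsec : Measurable (fun a : ℝ => (P.map Z) {z | a * z < -u}) :=
    measurable_measure_prodMk_left (ν := P.map Z) hS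
  have hNt : (P {ω | A i ω * Z ω < -u}).toReal
      = ∫ a, (if 0 < a then t (u/a) else 0) ∂(P.map (A i)) := by
    rw [hNum, ← integral_toReal hsec.aemeasurable (ae_of_all _ (fun a => measure_lt_top _ _))]
    refine integral_congr_ae ?_
    filter_upwards [hae i] with a ha0
    by_cases hpos : 0 < a
    · have hset : {z : ℝ | a * z < -u} = Iio (-(u/a)) := by
        ext z
        simp only [mem_setOf_eq, mem_Iio]
        rw [show -(u/a) = -u/a from (neg_div a u).symm, lt_div_iff₀ hpos, mul_comm]
      rw [hset, Measure.map_apply hZmeas measurableSet_Iio]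
      simp only [hpos, if_true]
      rfl
    · have ha00 : a = 0 := le_antisymm (not_lt.mp hpos) ha0
      have hset : {z : ℝ | a * z < -u} = ∅ := by
        ext z
        simp only [mem_setOf_eq, mem_empty_iff_false, iff_false, not_lt, ha00, zero_mul]
        linarith
      simp [hset, hpos]
  -- integrability of g u
  have hgint : Integrable (fun a => g u a) (P.map (A i)) := by
    refine Integrable.mono' (integrable_const (1 / t u)) ?_ (ae_of_all _ (fun a => ?_))
    · rw [hg_def]
      refine (Measurable.div_const ?_ _).aestronglyMeasurable
      refine Measurable.ite (measurableSet_lt measurable_const measurable_id) ?_ measurable_const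
      exact ht_mono.measurable.comp (measurable_const.div measurable_id)
    · rw [hg_def]
      simp only
      have hnum0 : 0 ≤ (if 0 < a then t (u/a) else 0) := by
        split_ifs; exacts [ht_nonneg _, le_refl _]
      have hnum1 : (if 0 < a then t (u/a) else 0) ≤ 1 := by
        split_ifs; exacts [ht_le_one _, zero_le_one]
      rw [Real.norm_eq_abs, abs_of_nonneg (div_nonneg hnum0 htu.le)]
      exact div_le_div_of_nonneg_right hnum1 htu.le
  have hfint : Integrable f (P.map (A i)) := hint_exp i α hα (by linarith)
  have hβint : Integrable (fun a => a ^ β) (P.map (A i)) :=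
    hint_exp i β hβpos (by rw [hβ_def]; linarith)
  have hE : ∫ ω, (A i ω) ^ α ∂P = ∫ a, f a ∂(P.map (A i)) :=
    (integral_map (hAmeas i).aemeasurable hf_contAll.aestronglyMeasurable).symm
  have hratio : (P {ω | A i ω * Z ω < -u}).toReal / (P {ω | Z ω < -u}).toReal
      = ∫ a, g u a ∂(P.map (A i)) := by
    have h0 : (P {ω | Z ω < -u}).toReal = t u := rfl
    rw [h0, hNt, ← integral_div]
  rw [hratio, hE]
  have hsub : ∫ a, g u a ∂(P.map (A i)) - ∫ a, f a ∂(P.map (A i))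
      = ∫ a, (g u a - f a) ∂(P.map (A i)) := (integral_sub hgint hfint).symm
  rw [hsub]
  have hintsub : Integrable (fun a => g u a - f a) (P.map (A i)) := hgint.sub hfint
  have habs : |∫ a, (g u a - f a) ∂(P.map (A i))| ≤ ∫ a, |g u a - f a| ∂(P.map (A i)) := by
    simpa [Real.norm_eq_abs] using
      norm_integral_le_integral_norm (μ := P.map (A i)) (fun a => g u a - f a)
  refine le_trans habs ?_
  have hintabs : Integrable (fun a => |g u a - f a|) (P.map (A i)) := hintsub.abs
  rw [← integral_add_compl (measurableSet_Iic (a := M)) hintabs, compl_Iic]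
  -- middle part
  have hmid : ∫ a in Iic M, |g u a - f a| ∂(P.map (A i)) ≤ δ/4 := by
    calc ∫ a in Iic M, |g u a - f a| ∂(P.map (A i))
        ≤ ∫ _a in Iic M, (δ/4) ∂(P.map (A i)) := by
          refine setIntegral_mono_on_ae hintabs.integrableOn (integrable_const _).integrableOn
            measurableSet_Iic ?_
          filter_upwards [hae i] with a ha0 haM
          exact hu₂ u hu₂u a ⟨ha0, haM⟩
      _ = ((P.map (A i)) (Iic M)).toReal • (δ/4) := by rw [setIntegral_const]; rfl
      _ ≤ 1 * (δ/4) := by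
          rw [smul_eq_mul]
          refine mul_le_mul_of_nonneg_right ?_ (by linarith)
          calc ((P.map (A i)) (Iic M)).toReal ≤ (1 : ℝ≥0∞).toReal :=
                ENNReal.toReal_mono (by simp) prob_le_one
            _ = 1 := by simp
      _ = δ/4 := one_mul _
  -- tail part
  have htail_g : ∫ a in Ioi M, |g u a - f a| ∂(P.map (A i)) ≤ δ/4 + δ/4 + δ/4 := by
    have hind : Integrable ((Ioi (u/u₁)).indicator (fun _ => (1:ℝ))) (P.map (A i)) :=
      (integrable_const 1).indicator measurableSet_Ioi
    set φ : ℝ → ℝ := fun a =>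
      2^(2*β) * a^β + (1/t u) * (Ioi (u/u₁)).indicator (fun _ => (1:ℝ)) a + f a with hφ
    have hφint : Integrable φ (P.map (A i)) :=
      ((hβint.const_mul _).add (hind.const_mul _)).add hfint
    have hmono_pt : ∀ᵐ a ∂(P.map (A i)), a ∈ Ioi M → |g u a - f a| ≤ φ a := by
      filter_upwards [hae i] with a ha0 haM
      have haM' : M < a := haM
      have ha1 : (1:ℝ) ≤ a := le_trans hM1 haM'.le
      have hapos : (0:ℝ) < a := lt_of_lt_of_le one_pos ha1
      have hfa0 : 0 ≤ f a := Real.rpow_nonneg ha0 _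
      have hga : g u a = t (u/a) / t u := by rw [hg_def]; simp [hapos]
      have hg0 : 0 ≤ g u a := by rw [hga]; exact div_nonneg (ht_nonneg _) htu.le
      have habs2 : |g u a - f a| ≤ g u a + f a := by
        rw [abs_le]; constructor <;> linarith
      have hindnn : 0 ≤ (Ioi (u/u₁)).indicator (fun _ => (1:ℝ)) a :=
        indicator_nonneg (fun _ _ => zero_le_one) a
      have hgbound : g u a
          ≤ 2^(2*β) * a^β + (1/t u) * (Ioi (u/u₁)).indicator (fun _ => (1:ℝ)) a := by
        rcases le_or_gt a (u/u₁) with hle | hgt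
        · have h1 : u₁ ≤ u / a := by
            rw [le_div_iff₀ hapos]
            rw [le_div_iff₀ hu₁pos] at hle
            linarith [mul_comm a u₁]
          have h2 := hpotter a u ha1 h1
          have h3 : g u a ≤ 2^(2*β) * a^β := by
            rw [hga, div_le_iff₀ htu]
            exact h2
          have h4 : 0 ≤ (1/t u) * (Ioi (u/u₁)).indicator (fun _ => (1:ℝ)) a :=
            mul_nonneg (by positivity) hindnn
          linarith
        · have h5 : (Ioi (u/u₁)).indicator (fun _ => (1:ℝ)) a = 1 := indicator_of_mem hgt _
          rw [h5]
          have h6 : g u a ≤ 1 / t u := by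
            rw [hga]
            exact div_le_div_of_nonneg_right (ht_le_one _) htu.le
          have h7 : 0 ≤ 2^(2*β) * a^β := by positivity
          linarith
      calc |g u a - f a| ≤ g u a + f a := habs2
        _ ≤ φ a := by rw [hφ]; simp only; linarith [hgbound]
    have hsplit : ∫ a in Ioi M, |g u a - f a| ∂(P.map (A i))
        ≤ ∫ a in Ioi M, φ a ∂(P.map (A i)) :=
      setIntegral_mono_on_ae hintabs.integrableOn hφint.integrableOn measurableSet_Ioi hmono_pt
    refine le_trans hsplit ?_
    have e1 : ∫ a in Ioi M, φ a ∂(P.map (A i)) =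
        2^(2*β) * ∫ a in Ioi M, a^β ∂(P.map (A i))
        + (1/t u) * ∫ a in Ioi M, (Ioi (u/u₁)).indicator (fun _ => (1:ℝ)) a ∂(P.map (A i))
        + ∫ a in Ioi M, f a ∂(P.map (A i)) := by
      have i1 : Integrable (fun a : ℝ => 2^(2*β) * a^β) (P.map (A i)) := hβint.const_mul _
      have i2 : Integrable (fun a : ℝ => (1/t u) * (Ioi (u/u₁)).indicator (fun _ => (1:ℝ)) a)
          (P.map (A i)) := hind.const_mul _
      have i12 : Integrable (fun a : ℝ =>
          2^(2*β) * a^β + (1/t u) * (Ioi (u/u₁)).indicator (fun _ => (1:ℝ)) a) (P.map (A i)) :=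
        i1.add i2
      rw [hφ]
      rw [integral_add i12.integrableOn hfint.integrableOn,
        integral_add i1.integrableOn i2.integrableOn,
        MeasureTheory.integral_const_mul, MeasureTheory.integral_const_mul]
    rw [e1]
    have hb1 : 2^(2*β) * ∫ a in Ioi M, a^β ∂(P.map (A i)) ≤ δ/4 := by
      have h1 := htail i β hβpos (by rw [hβ_def]; linarith) M hM1
      have h2 : (α+ε) - β = ε/2 := by rw [hβ_def]; ring
      rw [h2] at h1
      calc 2^(2*β) * ∫ a in Ioi M, a^β ∂(P.map (A i)) ≤ 2^(2*β) * (C' / M^(ε/2)) :=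
            mul_le_mul_of_nonneg_left h1 (by positivity)
        _ ≤ δ/4 := hMa
    have hb3 : ∫ a in Ioi M, f a ∂(P.map (A i)) ≤ δ/4 := by
      have h1 := htail i α hα (by linarith) M hM1
      have h2 : (α+ε) - α = ε := by ring
      rw [h2] at h1
      exact le_trans h1 hMb
    have hb2 : (1/t u) * ∫ a in Ioi M, (Ioi (u/u₁)).indicator (fun _ => (1:ℝ)) a ∂(P.map (A i))
        ≤ δ/4 := by
      have huu₁ : (1:ℝ) ≤ u/u₁ := (one_le_div hu₁pos).mpr hu₁u
      have huu₁pos : (0:ℝ) < u/u₁ := lt_of_lt_of_le one_pos huu₁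
      have ht1pos : 0 < t u₁ := ht_pos u₁ hu₁pos
      have h1 : ∫ a in Ioi M, (Ioi (u/u₁)).indicator (fun _ => (1:ℝ)) a ∂(P.map (A i))
          ≤ ((P.map (A i)) (Ioi (u/u₁))).toReal := by
        calc ∫ a in Ioi M, (Ioi (u/u₁)).indicator (fun _ => (1:ℝ)) a ∂(P.map (A i))
            ≤ ∫ a, (Ioi (u/u₁)).indicator (fun _ => (1:ℝ)) a ∂(P.map (A i)) :=
              setIntegral_le_integral hind
                (ae_of_all _ (indicator_nonneg (fun _ _ => zero_le_one)))
          _ = ((P.map (A i)) (Ioi (u/u₁))).toReal • (1:ℝ) :=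
              integral_indicator_const 1 measurableSet_Ioi
          _ = ((P.map (A i)) (Ioi (u/u₁))).toReal := by rw [smul_eq_mul, mul_one]
      have h2 : ((P.map (A i)) (Ioi (u/u₁))).toReal ≤ C' / (u/u₁)^(α+ε) := hmark i (u/u₁) huu₁
      have h3 : 1/t u ≤ 2^(2*β) * (u/u₁)^β / t u₁ := by
        have h4 := hlow u hu₁u
        rw [div_le_div_iff₀ htu ht1pos]
        nlinarith [h4]
      have hintnn : 0 ≤ ∫ a in Ioi M, (Ioi (u/u₁)).indicator (fun _ => (1:ℝ)) a ∂(P.map (A i)) :=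
        setIntegral_nonneg measurableSet_Ioi
          (fun a _ => indicator_nonneg (fun _ _ => zero_le_one) a)
      have h5 : (1/t u) * ∫ a in Ioi M, (Ioi (u/u₁)).indicator (fun _ => (1:ℝ)) a ∂(P.map (A i))
          ≤ (2^(2*β) * (u/u₁)^β / t u₁) * (C' / (u/u₁)^(α+ε)) := by
        refine mul_le_mul h3 (le_trans h1 h2) hintnn ?_
        exact div_nonneg (by positivity) ht1pos.le
      have hq : (u/u₁) ^ β / (u/u₁) ^ (α+ε) = (u/u₁) ^ (-(ε/2)) := by
        rw [← Real.rpow_sub huu₁pos]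
        congr 1
        rw [hβ_def]; ring
      have h6 : (2^(2*β) * (u/u₁)^β / t u₁) * (C' / (u/u₁)^(α+ε))
          = (2^(2*β) * C' / t u₁) * (u/u₁)^(-(ε/2)) := by
        rw [← hq]; ring
      rw [h6] at h5
      exact le_trans h5 (hu₄ u hu₄u)
    linarith [hb1, hb2, hb3]
  linarith [hmid, htail_g]
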